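/- Let X be the topological space on {m_i : i ∈ ℕ ∪ {∞}} ∪ {p_j : j ≥ 1} whose closed sets are the specialization-stable subsets that are finite or contain m_∞. Then the generalization closure of every point of X is finite; explicitly, the set of generalizations of m_0 is {m_0, p_1}, of m_n for 1 ≤ n < ∞ is {p_n, m_n, p_{n+1}}, of p_j is {p_j}, and of m_∞ is {m_∞}. -/
import Mathlib


open Topology

/-- The points of the space: `m i` for `i ∈ ℕ ∪ {∞}` and `p j` for `j ≥ 1`. -/
inductive Pt : Type where
  | m : ℕ∞ → Pt
  | p : ℕ+ → Pt

/-- Closed sets: specialization-stable subsets that are finite or contain `m ∞`. -/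
def ClosedCond (Z : Set Pt) : Prop :=
  (∀ j : ℕ+, Pt.p j ∈ Z →
      Pt.m (((j : ℕ) - 1 : ℕ) : ℕ∞) ∈ Z ∧ Pt.m ((j : ℕ) : ℕ∞) ∈ Z) ∧
  (Z.Finite ∨ Pt.m ⊤ ∈ Z)


/-- The generalization closure of every point is finite, and is computed explicitly:
generalizations of `m 0` are `{m 0, p 1}`, of `m n` (for `1 ≤ n < ∞`) are
`{p n, m n, p (n+1)}`, of `p j` are `{p j}`, and of `m ∞` are `{m ∞}`.
(`y ⤳ x` means that `y` specializes to `x`, i.e. `y` is a generalization of... rather,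
`x ∈ closure {y}`, so `{y | y ⤳ x}` is the set of generalizations of `x`.) -/
theorem stmt_9 [t : TopologicalSpace Pt]
    (ht : ∀ Z : Set Pt, IsClosed Z ↔ ClosedCond Z) :
    (∀ x : Pt, {y : Pt | y ⤳ x}.Finite) ∧
    ({y : Pt | y ⤳ Pt.m 0} = {Pt.m 0, Pt.p 1}) ∧
    (∀ n : ℕ+, {y : Pt | y ⤳ Pt.m ((n : ℕ) : ℕ∞)} =
      {Pt.p n, Pt.m ((n : ℕ) : ℕ∞), Pt.p (n + 1)}) ∧
    (∀ j : ℕ+, {y : Pt | y ⤳ Pt.p j} = {Pt.p j}) ∧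
    ({y : Pt | y ⤳ Pt.m ⊤} = {Pt.m ⊤}) := by
  have spec : ∀ x y : Pt, (y ⤳ x) ↔ x ∈ closure {y} := fun x y =>
    specializes_iff_mem_closure
  have cm : ∀ i : ℕ∞, closure ({Pt.m i} : Set Pt) = {Pt.m i} := by
    intro i
    refine IsClosed.closure_eq ((ht _).2 ⟨?_, Or.inl (Set.finite_singleton _)⟩)
    intro j hj; simp at hj
  have cp : ∀ j : ℕ+, closure ({Pt.p j} : Set Pt) =
      {Pt.p j, Pt.m (((j:ℕ)-1 : ℕ) : ℕ∞), Pt.m ((j:ℕ) : ℕ∞)} := by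
    intro j
    apply subset_antisymm
    · refine closure_minimal (by simp) ((ht _).2 ⟨?_, Or.inl ?_⟩)
      · intro j' hj'
        have : j' = j := by simpa using hj'
        subst this
        simp
      · exact (Set.finite_singleton _).insert _ |>.insert _
    · intro x hx
      have hm := ((ht _).1 (isClosed_closure (s := ({Pt.p j} : Set Pt)))).1 j
        (subset_closure (by simp))
      rcases hx with rfl | rfl | rfl
      · exact subset_closure rfl
      · exact hm.1
      · exact hm.2
  have h0 : {y : Pt | y ⤳ Pt.m 0} = {Pt.m 0, Pt.p 1} := by
    ext y
    cases y with
    | m i => simp [spec, cm, eq_comm]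
    | p j =>
      have hj := j.pos
      simp only [spec, cp, cm, Set.mem_setOf_eq, Set.mem_insert_iff,
        Set.mem_singleton_iff, Pt.m.injEq, Pt.p.injEq, @eq_comm ℕ∞ 0,
        Nat.cast_eq_zero, ← PNat.coe_inj, PNat.one_coe, reduceCtorEq,
        false_or, or_false]
      omega
  have hn : ∀ n : ℕ+, {y : Pt | y ⤳ Pt.m ((n : ℕ) : ℕ∞)} =
      {Pt.p n, Pt.m ((n : ℕ) : ℕ∞), Pt.p (n + 1)} := by
    intro n
    ext y
    cases y with
    | m i => simp [spec, cm, eq_comm]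
    | p j =>
      have hj := j.pos
      have hn' := n.pos
      simp only [spec, cp, cm, Set.mem_setOf_eq, Set.mem_insert_iff,
        Set.mem_singleton_iff, Pt.m.injEq, Pt.p.injEq, eq_comm,
        Nat.cast_inj, ← PNat.coe_inj, PNat.add_coe, PNat.one_coe,
        reduceCtorEq, false_or, or_false]
      omega
  have hp : ∀ j : ℕ+, {y : Pt | y ⤳ Pt.p j} = {Pt.p j} := by
    intro j
    ext y
    cases y with
    | m i => simp [spec, cm]
    | p j' => simp [spec, cp, eq_comm]
  have htop : {y : Pt | y ⤳ Pt.m ⊤} = {Pt.m ⊤} := by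
    ext y
    cases y with
    | m i => simp [spec, cm, eq_comm]
    | p j =>
      simp only [spec, cp, Set.mem_setOf_eq, Set.mem_insert_iff,
        Set.mem_singleton_iff, Pt.m.injEq, reduceCtorEq, false_or, or_false,
        iff_false]
      rintro (h | h) <;> exact (ENat.coe_ne_top _) h.symm
  refine ⟨?_, h0, hn, hp, htop⟩
  intro x
  cases x with
  | p j => rw [hp]; exact Set.finite_singleton _
  | m i =>
    induction i using ENat.recTopCoe with
    | top => rw [htop]; exact Set.finite_singleton _
    | coe n =>
      cases n with
      | zero =>
        rw [show ((0:ℕ):ℕ∞) = 0 by simp, h0]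
        exact (Set.finite_singleton _).insert _
      | succ k =>
        have h := hn ⟨k+1, k.succ_pos⟩
        exact Set.Finite.subset (((Set.finite_singleton _).insert _).insert _)
          (Set.Subset.trans (by exact h.subset) (by exact Set.Subset.rfl))
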